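/- Let 0 < β < π/2, and let r, n₁, n₂ be unit vectors in the Euclidean plane with angle(n₁, r) = π/2 − β, angle(n₂, r) = π/2 − β, and angle(n₁, n₂) = π − 2β. Then for every nonzero vector x: angle(x, r) ≤ β if and only if 0 ≤ ⟪n₁, x⟫ and 0 ≤ ⟪n₂, x⟫. -/

import Mathlib

set_option maxHeartbeats 1000000


open Real InnerProductGeometry RealInnerProductSpace

/-- The geometric fact underlying the paper's Lemma 15: membership in a cone of
half-angle `β` with axis `r` is equivalent to nonnegativity of the projections onto the
two inward normals `n₁, n₂` of the cone's bounding half-lines. -/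
theorem cone_membership_iff_normals
    (β : ℝ) (hβ0 : 0 < β) (hβ : β < Real.pi / 2)
    (r n₁ n₂ : EuclideanSpace ℝ (Fin 2))
    (hr : ‖r‖ = 1) (hn₁ : ‖n₁‖ = 1) (hn₂ : ‖n₂‖ = 1)
    (ha₁ : InnerProductGeometry.angle n₁ r = Real.pi / 2 - β)
    (ha₂ : InnerProductGeometry.angle n₂ r = Real.pi / 2 - β)
    (ha₁₂ : InnerProductGeometry.angle n₁ n₂ = Real.pi - 2 * β) :
    ∀ x : EuclideanSpace ℝ (Fin 2), x ≠ 0 →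
      (InnerProductGeometry.angle x r ≤ β ↔ 0 ≤ ⟪n₁, x⟫ ∧ 0 ≤ ⟪n₂, x⟫) := by
  have hπ := Real.pi_pos
  have hc : 0 < Real.cos β := Real.cos_pos_of_mem_Ioo ⟨by linarith, hβ⟩
  have hsin : 0 < Real.sin β := Real.sin_pos_of_pos_of_lt_pi hβ0 (by linarith)
  have hsc : Real.sin β ^ 2 + Real.cos β ^ 2 = 1 := Real.sin_sq_add_cos_sq β
  have i1r : ⟪n₁, r⟫ = Real.sin β := by
    have h := InnerProductGeometry.cos_angle n₁ r
    rw [ha₁, hn₁, hr, Real.cos_pi_div_two_sub] at h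
    simpa using h.symm
  have i2r : ⟪n₂, r⟫ = Real.sin β := by
    have h := InnerProductGeometry.cos_angle n₂ r
    rw [ha₂, hn₂, hr, Real.cos_pi_div_two_sub] at h
    simpa using h.symm
  have i12 : ⟪n₁, n₂⟫ = Real.sin β ^ 2 - Real.cos β ^ 2 := by
    have h := InnerProductGeometry.cos_angle n₁ n₂
    rw [ha₁₂, Real.cos_pi_sub, hn₁, hn₂, Real.cos_two_mul] at h
    simp only [mul_one, div_one] at h
    nlinarith [h, hsc]
  have hrr : ⟪r, r⟫ = (1:ℝ) := by rw [real_inner_self_eq_norm_sq, hr]; norm_num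
  have h11 : ⟪n₁, n₁⟫ = (1:ℝ) := by rw [real_inner_self_eq_norm_sq, hn₁]; norm_num
  have h22 : ⟪n₂, n₂⟫ = (1:ℝ) := by rw [real_inner_self_eq_norm_sq, hn₂]; norm_num
  have ir1 : ⟪r, n₁⟫ = Real.sin β := by rw [real_inner_comm]; exact i1r
  have ir2 : ⟪r, n₂⟫ = Real.sin β := by rw [real_inner_comm]; exact i2r
  have i21 : ⟪n₂, n₁⟫ = Real.sin β ^ 2 - Real.cos β ^ 2 := by rw [real_inner_comm]; exact i12
  -- key identity: n₁ + n₂ = (2 sin β) • r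
  have key : n₁ + n₂ = (2 * Real.sin β) • r := by
    have h0 : ⟪n₁ + n₂ - (2 * Real.sin β) • r, n₁ + n₂ - (2 * Real.sin β) • r⟫ = (0:ℝ) := by
      simp only [inner_sub_left, inner_sub_right, inner_add_left, inner_add_right,
        real_inner_smul_left, real_inner_smul_right, i1r, i2r, i12, i21, ir1, ir2,
        hrr, h11, h22]
      nlinarith [hsc]
    exact sub_eq_zero.mp (inner_self_eq_zero.mp h0)
  -- the orthonormal companion s
  set s : EuclideanSpace ℝ (Fin 2) := (2 * Real.cos β)⁻¹ • (n₁ - n₂) with hs_def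
  have h2c : (2 * Real.cos β) ≠ 0 := by positivity
  have hdiff : n₁ - n₂ = (2 * Real.cos β) • s := by
    rw [hs_def, smul_smul, mul_inv_cancel₀ h2c, one_smul]
  have irs : ⟪r, s⟫ = 0 := by
    rw [hs_def, real_inner_smul_right, inner_sub_right, ir1, ir2]
    ring
  have hsr : ⟪s, r⟫ = (0:ℝ) := by rw [real_inner_comm]; exact irs
  have hss : ⟪s, s⟫ = (1:ℝ) := by
    rw [hs_def, real_inner_smul_left, real_inner_smul_right, inner_sub_left,
      inner_sub_right, inner_sub_right, h11, h22, i12, i21]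
    field_simp
    nlinarith [hsc]
  -- orthonormal basis {r, s}
  have hortho : Orthonormal ℝ ![r, s] := by
    rw [orthonormal_iff_ite]
    intro i j
    fin_cases i <;> fin_cases j <;>
      simp only [Matrix.cons_val_zero, Matrix.cons_val_one, Matrix.head_cons,
        Fin.mk_zero, Fin.mk_one] <;> norm_num [hrr, hss, irs, hsr, hr,
        (by rw [norm_eq_sqrt_real_inner, hss, Real.sqrt_one] : ‖s‖ = 1)]
  have hcard : Fintype.card (Fin 2) = Module.finrank ℝ (EuclideanSpace ℝ (Fin 2)) := by
    simp [finrank_euclideanSpace_fin]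
  let b : Module.Basis (Fin 2) ℝ (EuclideanSpace ℝ (Fin 2)) :=
    basisOfOrthonormalOfCardEqFinrank hortho hcard
  have hb : ⇑b = ![r, s] := coe_basisOfOrthonormalOfCardEqFinrank hortho hcard
  have hob := b.toOrthonormalBasis (by rw [hb]; exact hortho)
  -- decomposition of any x
  have hdecomp : ∀ x : EuclideanSpace ℝ (Fin 2), x = ⟪r, x⟫ • r + ⟪s, x⟫ • s := by
    intro x
    have := (b.toOrthonormalBasis (by rw [hb]; exact hortho)).sum_repr' x
    rw [Fin.sum_univ_two] at this
    have hb0 : (b.toOrthonormalBasis (by rw [hb]; exact hortho)) 0 = r := by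
      rw [Module.Basis.coe_toOrthonormalBasis, hb]; rfl
    have hb1 : (b.toOrthonormalBasis (by rw [hb]; exact hortho)) 1 = s := by
      rw [Module.Basis.coe_toOrthonormalBasis, hb]; rfl
    rw [hb0, hb1] at this
    exact this.symm
  intro x hx
  obtain ⟨a, bb, hxab⟩ : ∃ a bb : ℝ, x = a • r + bb • s := ⟨_, _, hdecomp x⟩
  have hax : ⟪r, x⟫ = a := by
    rw [hxab, inner_add_right, real_inner_smul_right, real_inner_smul_right, hrr, irs]; ring
  have hbx : ⟪s, x⟫ = bb := by
    rw [hxab, inner_add_right, real_inner_smul_right, real_inner_smul_right,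
      hsr, hss]; ring
  have hxnorm : ‖x‖ ^ 2 = a ^ 2 + bb ^ 2 := by
    rw [← real_inner_self_eq_norm_sq, hxab]
    simp only [inner_add_left, inner_add_right, real_inner_smul_left, real_inner_smul_right,
      hrr, hss, irs, hsr]
    ring
  have hxpos : 0 < ‖x‖ := norm_pos_iff.mpr hx
  -- inner products with the normals
  have hn1x : ⟪n₁, x⟫ = Real.sin β * a + Real.cos β * bb := by
    have hsum : ⟪n₁, x⟫ + ⟪n₂, x⟫ = 2 * Real.sin β * a := by
      rw [← inner_add_left, key, real_inner_smul_left, hax]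
    have hdif : ⟪n₁, x⟫ - ⟪n₂, x⟫ = 2 * Real.cos β * bb := by
      rw [← inner_sub_left, hdiff, real_inner_smul_left, hbx]
    linarith
  have hn2x : ⟪n₂, x⟫ = Real.sin β * a - Real.cos β * bb := by
    have hsum : ⟪n₁, x⟫ + ⟪n₂, x⟫ = 2 * Real.sin β * a := by
      rw [← inner_add_left, key, real_inner_smul_left, hax]
    have hdif : ⟪n₁, x⟫ - ⟪n₂, x⟫ = 2 * Real.cos β * bb := by
      rw [← inner_sub_left, hdiff, real_inner_smul_left, hbx]
    linarith
  -- angle condition as inner product inequality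
  have hangle : InnerProductGeometry.angle x r ≤ β ↔ Real.cos β * ‖x‖ ≤ a := by
    have hcosang : Real.cos (InnerProductGeometry.angle x r) = a / ‖x‖ := by
      rw [InnerProductGeometry.cos_angle, hr, real_inner_comm, hax, mul_one]
    constructor
    · intro h
      have hcos : Real.cos β ≤ Real.cos (InnerProductGeometry.angle x r) :=
        Real.cos_le_cos_of_nonneg_of_le_pi (InnerProductGeometry.angle_nonneg x r)
          (by linarith) h
      rw [hcosang, le_div_iff₀ hxpos] at hcos
      linarith
    · intro h
      have hcos : Real.cos β ≤ Real.cos (InnerProductGeometry.angle x r) := by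
        rw [hcosang, le_div_iff₀ hxpos]; linarith
      by_contra hlt
      push_neg at hlt
      have hlt2 := Real.cos_lt_cos_of_nonneg_of_le_pi (by linarith : (0:ℝ) ≤ β)
        (InnerProductGeometry.angle_le_pi x r) hlt
      linarith
  rw [hangle, hn1x, hn2x]
  constructor
  · intro h
    have ha0 : 0 < a := lt_of_lt_of_le (by positivity) h
    have hbig : Real.cos β ^ 2 * (a ^ 2 + bb ^ 2) ≤ a ^ 2 := by
      have h' := mul_le_mul h h (by positivity) ha0.le
      nlinarith [hxnorm, sq_nonneg (Real.cos β)]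
    have h2' : (Real.cos β * bb) ^ 2 ≤ (Real.sin β * a) ^ 2 := by
      nlinarith [hbig, hsc, sq_nonneg a]
    obtain ⟨hl, hr⟩ := abs_le_of_sq_le_sq' h2' (by positivity)
    constructor <;> linarith
  · rintro ⟨h1, h2⟩
    have ha0 : 0 ≤ a := by nlinarith [mul_nonneg h1 h2]
    have hsq : (Real.cos β * ‖x‖) ^ 2 ≤ a ^ 2 := by
      nlinarith [mul_nonneg h1 h2, hsc, hxnorm, sq_nonneg (Real.cos β), sq_nonneg a,
        sq_nonneg bb]
    have habs := abs_le_of_sq_le_sq hsq ha0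
    calc Real.cos β * ‖x‖ ≤ |Real.cos β * ‖x‖| := le_abs_self _
      _ ≤ a := habs
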